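/- Let G = (V,E) be a finite simple undirected graph on n vertices, where n is even, and let γ = n/2. If G is (γ,γ)-robust, then for every integer k ≥ 2 satisfying (k-1)·(2γ - ⌈γ/2⌉) < 2γ², the graph G contains a clique on k vertices. -/

import Mathlib

open Finset

variable {V : Type*}

/-- `XSet G r S` is the set of vertices of `S` having at least `r` neighbors outside `S`. -/
def XSet [Fintype V] [DecidableEq V] (G : SimpleGraph V) [DecidableRel G.Adj]
    (r : ℕ) (S : Finset V) : Finset V :=
  S.filter fun i => r ≤ (G.neighborFinset i \ S).card

/-- `G` is `(r,s)`-robust (for integers `r ≥ 1`, `s ≥ 0`) if for every pair of nonempty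
disjoint subsets `S1, S2` of the vertex set, either all vertices of `S1` have at least `r`
neighbors outside `S1`, or all vertices of `S2` have at least `r` neighbors outside `S2`,
or `|X^r_{S1}| + |X^r_{S2}| ≥ s`. -/
def RSRobust [Fintype V] [DecidableEq V] (G : SimpleGraph V) [DecidableRel G.Adj]
    (r s : ℕ) : Prop :=
  1 ≤ r ∧ ∀ S1 S2 : Finset V, S1.Nonempty → S2.Nonempty → Disjoint S1 S2 →
    (XSet G r S1).card = S1.card ∨ (XSet G r S2).card = S2.card ∨
      s ≤ (XSet G r S1).card + (XSet G r S2).card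

/-- The set of non-neighbors of `v` (other than `v` itself). -/
def nonNbrs [Fintype V] [DecidableEq V] (G : SimpleGraph V) [DecidableRel G.Adj]
    (v : V) : Finset V :=
  (univ.erase v).filter fun u => ¬ G.Adj v u

section Helpers

variable [Fintype V] [DecidableEq V] (G : SimpleGraph V) [DecidableRel G.Adj]

lemma mem_nonNbrs {v u : V} : u ∈ nonNbrs G v ↔ u ≠ v ∧ ¬ G.Adj v u := by
  unfold nonNbrs
  rw [mem_filter, mem_erase]
  simp only [mem_univ, and_true]

lemma nonNbrs_symm {v u : V} (h : u ∈ nonNbrs G v) : v ∈ nonNbrs G u := by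
  rw [mem_nonNbrs] at h ⊢
  exact ⟨h.1.symm, fun ha => h.2 ha.symm⟩

lemma card_nbr_add_nonNbrs (γ : ℕ) (hcard : Fintype.card V = 2 * γ) (v : V) :
    (G.neighborFinset v).card + (nonNbrs G v).card = 2 * γ - 1 := by
  have hderase : (univ.erase v).card = 2 * γ - 1 := by
    rw [card_erase_of_mem (mem_univ v), card_univ, hcard]
  have hNv : ((univ.erase v).filter fun u => G.Adj v u) = G.neighborFinset v := by
    ext u
    rw [mem_filter, mem_erase, SimpleGraph.mem_neighborFinset]
    simp only [mem_univ, and_true]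
    exact ⟨fun h => h.2, fun h => ⟨h.ne', h⟩⟩
  have hsplit := card_filter_add_card_filter_not
    (s := univ.erase v) (p := fun u => G.Adj v u)
  rw [hNv] at hsplit
  have hnn : nonNbrs G v = (univ.erase v).filter fun u => ¬ G.Adj v u := rfl
  rw [hnn, hsplit, hderase]

/-- Key construction: in a `(γ,γ)`-robust graph on `2γ` vertices, every vertex has at
most one non-neighbor. -/
lemma nonNbrs_card_le_one (γ : ℕ) (hcard : Fintype.card V = 2 * γ)
    (hrob : RSRobust G γ γ) (v : V) : (nonNbrs G v).card ≤ 1 := by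
  by_contra hle
  push_neg at hle
  have hγ1 : 1 ≤ γ := hrob.1
  set d := (nonNbrs G v).card with hd
  have hNsum := card_nbr_add_nonNbrs G γ hcard v
  rw [← hd] at hNsum
  have hγ2 : 2 ≤ γ := by omega
  obtain ⟨F, hFsub, hFcard⟩ := exists_subset_card_eq (show γ - d ≤ (G.neighborFinset v).card by omega)
  have hvF : v ∉ F := by
    intro h
    have h2 := hFsub h
    rw [SimpleGraph.mem_neighborFinset] at h2
    exact G.irrefl h2
  set S2 := insert v F with hS2
  have hS2card : S2.card = γ - d + 1 := by
    rw [hS2, card_insert_of_notMem hvF, hFcard]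
  set S1 := (univ : Finset V) \ S2 with hS1
  have hS1card : S1.card = 2 * γ - (γ - d + 1) := by
    rw [hS1, card_sdiff_of_subset (subset_univ _), card_univ, hcard, hS2card]
  have hS1big : γ + 1 ≤ S1.card := by omega
  have hX1 : (XSet G γ S1).card = 0 := by
    rw [card_eq_zero, eq_empty_iff_forall_notMem]
    intro i hi
    rw [XSet, mem_filter] at hi
    have h1 : (G.neighborFinset i \ S1) ⊆ univ \ S1 :=
      sdiff_subset_sdiff (subset_univ _) Subset.rfl
    have h2 : ((univ : Finset V) \ S1).card = 2 * γ - S1.card := by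
      rw [card_sdiff_of_subset (subset_univ _), card_univ, hcard]
    have h3 := card_le_card h1
    omega
  have hvX2 : v ∉ XSet G γ S2 := by
    intro hv
    rw [XSet, mem_filter] at hv
    have h1 : (G.neighborFinset v \ S2) ⊆ G.neighborFinset v \ F :=
      sdiff_subset_sdiff Subset.rfl (subset_insert _ _)
    have h2 : (G.neighborFinset v \ F).card = (G.neighborFinset v).card - (γ - d) := by
      rw [card_sdiff_of_subset hFsub, hFcard]
    have h3 := card_le_card h1
    omega
  have hX2 : (XSet G γ S2).card ≤ γ - d := by
    have hsub : XSet G γ S2 ⊆ S2.erase v := by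
      intro x hx
      rw [mem_erase]
      exact ⟨fun h => hvX2 (h ▸ hx), (filter_subset _ _) hx⟩
    have h1 := card_le_card hsub
    have h2 : (S2.erase v).card = S2.card - 1 :=
      card_erase_of_mem (mem_insert_self _ _)
    omega
  have hne1 : S1.Nonempty := card_pos.mp (by omega)
  have hne2 : S2.Nonempty := insert_nonempty _ _
  rcases hrob.2 S1 S2 hne1 hne2 sdiff_disjoint with h | h | h <;> omega

/-- Splitting a fixed-point-free involutive family into two halves. -/
lemma half_split (p : V → V) :
    ∀ (n : ℕ) (B : Finset V), B.card ≤ n →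
      (∀ v ∈ B, p v ∈ B ∧ p v ≠ v ∧ p (p v) = v) →
      ∃ L ⊆ B, ∀ v ∈ B, (v ∈ L ↔ p v ∉ L) := by
  intro n
  induction n with
  | zero =>
      intro B hB _
      have hBe : B = ∅ := card_eq_zero.mp (Nat.le_antisymm hB (Nat.zero_le _))
      subst hBe
      exact ⟨∅, empty_subset _, fun v hv => absurd hv (notMem_empty v)⟩
  | succ n ih =>
      intro B hB hprop
      rcases B.eq_empty_or_nonempty with rfl | ⟨v, hv⟩
      · exact ⟨∅, empty_subset _, fun v hv => absurd hv (notMem_empty v)⟩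
      obtain ⟨hpvB, hpvne, hpp⟩ := hprop v hv
      set B' := B \ {v, p v} with hB'
      have hB'prop : ∀ x ∈ B', p x ∈ B' ∧ p x ≠ x ∧ p (p x) = x := by
        intro x hx
        rw [hB', mem_sdiff] at hx
        obtain ⟨hxB, hxnot⟩ := hx
        obtain ⟨h1, h2, h3⟩ := hprop x hxB
        refine ⟨?_, h2, h3⟩
        rw [hB', mem_sdiff]
        refine ⟨h1, ?_⟩
        intro hmem
        rw [mem_insert, mem_singleton] at hmem
        rcases hmem with h | h
        · apply hxnot
          rw [mem_insert, mem_singleton]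
          right
          rw [← h3, h]
        · apply hxnot
          rw [mem_insert, mem_singleton]
          left
          rw [← h3, h, hpp]
      have hB'card : B'.card ≤ n := by
        have h1 : B' ⊆ B.erase v := by
          intro x hx
          rw [hB', mem_sdiff] at hx
          rw [mem_erase]
          exact ⟨fun h => hx.2 (by rw [h]; exact mem_insert_self _ _), hx.1⟩
        have h2 := card_le_card h1
        rw [card_erase_of_mem hv] at h2
        omega
      obtain ⟨L', hL'sub, hL'iff⟩ := ih B' hB'card hB'prop
      have hvL' : v ∉ L' := fun h => by
        have h2 := hL'sub h
        rw [hB', mem_sdiff] at h2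
        exact h2.2 (mem_insert_self _ _)
      have hpvL' : p v ∉ L' := fun h => by
        have h2 := hL'sub h
        rw [hB', mem_sdiff] at h2
        exact h2.2 (by rw [mem_insert, mem_singleton]; right; rfl)
      refine ⟨insert v L', insert_subset hv (hL'sub.trans sdiff_subset), ?_⟩
      intro x hx
      by_cases hxv : x = v
      · subst hxv
        simp only [mem_insert, true_or, true_iff]
        intro hmem
        rcases hmem with h | h
        · exact hpvne h
        · exact hpvL' h
      by_cases hxpv : x = p v
      · subst hxpv
        constructor
        · intro hmem
          rcases mem_insert.mp hmem with h | h
          · exact absurd h hpvne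
          · exact absurd h hpvL'
        · intro hmem
          exfalso
          apply hmem
          rw [hpp]
          exact mem_insert_self _ _
      · have hxB' : x ∈ B' := by
          rw [hB', mem_sdiff]
          refine ⟨hx, ?_⟩
          rw [mem_insert, mem_singleton]
          push_neg
          exact ⟨hxv, hxpv⟩
        obtain ⟨hpxB', hpxne, -⟩ := hB'prop x hxB'
        have hpxv : p x ≠ v := by
          intro h
          rw [hB', mem_sdiff] at hpxB'
          exact hpxB'.2 (by rw [h]; exact mem_insert_self _ _)
        have h1 : (x ∈ insert v L') ↔ x ∈ L' := by
          rw [mem_insert]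
          simp [hxv]
        have h2 : (p x ∉ insert v L') ↔ p x ∉ L' := by
          rw [mem_insert]
          simp [hpxv]
        rw [h1, h2]
        exact hL'iff x hxB'

/-- A choice of "the" non-neighbor, forming an involution on vertices having one. -/
lemma exists_pfun (hone : ∀ v : V, (nonNbrs G v).card ≤ 1) :
    ∃ p : V → V, ∀ v : V, 0 < (nonNbrs G v).card →
      p v ∈ nonNbrs G v ∧ 0 < (nonNbrs G (p v)).card ∧ p (p v) = v := by
  have hch : ∀ v : V, ∃ w : V, 0 < (nonNbrs G v).card → w ∈ nonNbrs G v := by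
    intro v
    by_cases h : 0 < (nonNbrs G v).card
    · obtain ⟨w, hw⟩ := card_pos.mp h
      exact ⟨w, fun _ => hw⟩
    · exact ⟨v, fun hc => absurd hc h⟩
  choose p hp using hch
  refine ⟨p, fun v hv => ?_⟩
  have h1 := hp v hv
  have h2 : v ∈ nonNbrs G (p v) := nonNbrs_symm G h1
  have h3 : 0 < (nonNbrs G (p v)).card := card_pos.mpr ⟨v, h2⟩
  have h4 := hp (p v) h3
  have h5 : p (p v) = v := card_le_one.mp (hone (p v)) _ h4 _ h2
  exact ⟨h1, h3, h5⟩

/-- The set of vertices having a non-neighbor has size at most `γ`. -/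
lemma bad_card_le (γ : ℕ) (hcard : Fintype.card V = 2 * γ) (hrob : RSRobust G γ γ) :
    (univ.filter fun v : V => 0 < (nonNbrs G v).card).card ≤ γ := by
  by_contra hbig
  push_neg at hbig
  have hγ1 : 1 ≤ γ := hrob.1
  set Bad := univ.filter (fun v : V => 0 < (nonNbrs G v).card) with hBad
  have hone := nonNbrs_card_le_one G γ hcard hrob
  obtain ⟨p, hp⟩ := exists_pfun G hone
  have hclosed : ∀ v ∈ Bad, p v ∈ Bad ∧ p v ≠ v ∧ p (p v) = v := by
    intro v hv
    rw [hBad, mem_filter] at hv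
    obtain ⟨h1, h2, h3⟩ := hp v hv.2
    exact ⟨by rw [hBad, mem_filter]; exact ⟨mem_univ _, h2⟩,
      ((mem_nonNbrs G).mp h1).1, h3⟩
  obtain ⟨L, hLsub, hLiff⟩ := half_split p Bad.card Bad le_rfl hclosed
  have himg : Bad \ L = L.image p := by
    ext x
    rw [mem_sdiff, mem_image]
    constructor
    · rintro ⟨hxB, hxL⟩
      have hpx : p x ∈ L := by
        by_contra hn
        exact hxL ((hLiff x hxB).mpr hn)
      exact ⟨p x, hpx, (hclosed x hxB).2.2⟩
    · rintro ⟨l, hl, rfl⟩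
      have hlB := hLsub hl
      exact ⟨(hclosed l hlB).1, (hLiff l hlB).mp hl⟩
  have hinj : Set.InjOn p ↑L := by
    intro a ha b hb hab
    have h1 := (hclosed a (hLsub (mem_coe.mp ha))).2.2
    have h2 := (hclosed b (hLsub (mem_coe.mp hb))).2.2
    rw [← h1, hab, h2]
  have hRcard : (Bad \ L).card = L.card := by
    rw [himg, card_image_of_injOn hinj]
  have hsplitc : (Bad \ L).card + L.card = Bad.card := card_sdiff_add_card_eq_card hLsub
  set m := L.card with hm
  have hBad2m : Bad.card = 2 * m := by omega
  have hBadle2γ : Bad.card ≤ 2 * γ := by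
    rw [← hcard, ← card_univ]
    exact card_le_card (filter_subset _ _)
  obtain ⟨F, hFsub, hFcard⟩ := exists_subset_card_eq (show γ - m ≤ ((univ : Finset V) \ Bad).card
    by rw [card_sdiff_of_subset (subset_univ _), card_univ, hcard]; omega)
  set R := Bad \ L with hR
  set S2 := R ∪ F with hS2
  have hdisjRF : Disjoint R F := by
    rw [disjoint_left]
    intro x hxR hxF
    have h1 : x ∈ Bad := by rw [hR, mem_sdiff] at hxR; exact hxR.1
    have h2 := hFsub hxF
    rw [mem_sdiff] at h2
    exact h2.2 h1
  have hS2card : S2.card = γ := by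
    rw [hS2, card_union_of_disjoint hdisjRF]
    omega
  set S1 := (univ : Finset V) \ S2 with hS1
  have hS1card : S1.card = γ := by
    rw [hS1, card_sdiff_of_subset (subset_univ _), card_univ, hcard, hS2card]
    omega
  have hLS1 : ∀ v ∈ L, v ∈ S1 := by
    intro v hv
    rw [hS1, mem_sdiff]
    refine ⟨mem_univ _, ?_⟩
    rw [hS2, mem_union]
    rintro (h | h)
    · rw [hR, mem_sdiff] at h
      exact h.2 hv
    · have h2 := hFsub h
      rw [mem_sdiff] at h2
      exact h2.2 (hLsub hv)
  have hpR : ∀ v ∈ R, p v ∈ L := by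
    intro v hv
    rw [hR, mem_sdiff] at hv
    by_contra hn
    exact hv.2 ((hLiff v hv.1).mpr hn)
  have hpL : ∀ v ∈ L, p v ∈ R := by
    intro v hv
    have hvB := hLsub hv
    rw [hR, mem_sdiff]
    exact ⟨(hclosed v hvB).1, (hLiff v hvB).mp hv⟩
  have hpnb : ∀ v ∈ Bad, ¬ G.Adj v (p v) := by
    intro v hv
    rw [hBad, mem_filter] at hv
    exact ((mem_nonNbrs G).mp (hp v hv.2).1).2
  have hnotX2 : ∀ v ∈ R, v ∉ XSet G γ S2 := by
    intro v hvR hvX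
    rw [XSet, mem_filter] at hvX
    have hvBad : v ∈ Bad := by rw [hR, mem_sdiff] at hvR; exact hvR.1
    have hpv := hpR v hvR
    have hpvS1 : p v ∈ S1 := hLS1 _ hpv
    rw [hS1] at hpvS1
    have hadj : ¬ G.Adj v (p v) := hpnb v hvBad
    have hsub : G.neighborFinset v \ S2 ⊆ ((univ : Finset V) \ S2).erase (p v) := by
      intro x hx
      rw [mem_sdiff] at hx
      rw [mem_erase, mem_sdiff]
      refine ⟨?_, mem_univ _, hx.2⟩
      intro h
      apply hadj
      rw [← h]
      have h4 := hx.1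
      rw [SimpleGraph.mem_neighborFinset] at h4
      exact h4
    have hc1 : (((univ : Finset V) \ S2).erase (p v)).card
        = ((univ : Finset V) \ S2).card - 1 := card_erase_of_mem hpvS1
    have hc2 : ((univ : Finset V) \ S2).card = γ := by
      rw [card_sdiff_of_subset (subset_univ _), card_univ, hcard, hS2card]
      omega
    have h3 := card_le_card hsub
    omega
  have hnotX1 : ∀ v ∈ L, v ∉ XSet G γ S1 := by
    intro v hvL hvX
    rw [XSet, mem_filter] at hvX
    have hvBad := hLsub hvL
    have hpv := hpL v hvL
    have hpvS2 : p v ∈ S2 := by rw [hS2, mem_union]; exact Or.inl hpv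
    have hpvnot : p v ∈ (univ : Finset V) \ S1 := by
      rw [mem_sdiff]
      refine ⟨mem_univ _, fun h => ?_⟩
      rw [hS1, mem_sdiff] at h
      exact h.2 hpvS2
    have hadj : ¬ G.Adj v (p v) := hpnb v hvBad
    have hsub : G.neighborFinset v \ S1 ⊆ ((univ : Finset V) \ S1).erase (p v) := by
      intro x hx
      rw [mem_sdiff] at hx
      rw [mem_erase, mem_sdiff]
      refine ⟨?_, mem_univ _, hx.2⟩
      intro h
      apply hadj
      rw [← h]
      have h4 := hx.1
      rw [SimpleGraph.mem_neighborFinset] at h4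
      exact h4
    have hc1 : (((univ : Finset V) \ S1).erase (p v)).card
        = ((univ : Finset V) \ S1).card - 1 := card_erase_of_mem hpvnot
    have hc2 : ((univ : Finset V) \ S1).card = γ := by
      rw [card_sdiff_of_subset (subset_univ _), card_univ, hcard, hS1card]
      omega
    have h3 := card_le_card hsub
    omega
  have hX2card : (XSet G γ S2).card ≤ γ - m := by
    have hsub : XSet G γ S2 ⊆ F := by
      intro x hx
      have hxS2 : x ∈ S2 := (filter_subset _ _) hx
      rw [hS2, mem_union] at hxS2
      rcases hxS2 with h | h
      · exact absurd hx (hnotX2 x h)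
      · exact h
    have h1 := card_le_card hsub
    omega
  have hX1card : (XSet G γ S1).card ≤ γ - m := by
    have hsub : XSet G γ S1 ⊆ S1 \ L := by
      intro x hx
      rw [mem_sdiff]
      exact ⟨(filter_subset _ _) hx, fun h => hnotX1 x h hx⟩
    have hLsubS1 : L ⊆ S1 := fun v hv => hLS1 v hv
    have h1 := card_le_card hsub
    have h2 : (S1 \ L).card = S1.card - L.card := card_sdiff_of_subset hLsubS1
    omega
  rcases hrob.2 S1 S2 (card_pos.mp (by omega)) (card_pos.mp (by omega))
    sdiff_disjoint with h | h | h <;> omega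

end Helpers

/-- If `G` is a graph on an even number `n` of vertices, `γ = n/2`, and `G` is
`(γ,γ)`-robust, then for every integer `k ≥ 2` with `(k-1)·(2γ - ⌈γ/2⌉) < 2γ²`, the graph
`G` contains a clique on `k` vertices. -/
theorem stmt13 [Fintype V] [DecidableEq V] (G : SimpleGraph V) [DecidableRel G.Adj]
    (n γ : ℕ) (hn : Fintype.card V = n) (heven : Even n) (hγ : γ = n / 2)
    (hrob : RSRobust G γ γ) :
    ∀ k : ℕ, 2 ≤ k → (k - 1) * (2 * γ - (γ + 1) / 2) < 2 * γ ^ 2 →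
      ∃ t : Finset V, G.IsNClique k t := by
  intro k hk2 hcond
  have hγ1 : 1 ≤ γ := hrob.1
  have hcard : Fintype.card V = 2 * γ := by
    obtain ⟨r, hr⟩ := heven
    omega
  have hone := nonNbrs_card_le_one G γ hcard hrob
  have hBadle := bad_card_le G γ hcard hrob
  obtain ⟨p, hp⟩ := exists_pfun G hone
  set Bad := univ.filter (fun v : V => 0 < (nonNbrs G v).card) with hBadDef
  set c := (γ + 1) / 2 with hc
  have hclique : ∀ j : ℕ, j ≤ γ + c → ∃ T : Finset V, G.IsNClique j T := by
    intro j
    induction j with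
    | zero =>
        intro _
        exact ⟨∅, by simp⟩
    | succ j ih =>
        intro hj
        obtain ⟨T, hT⟩ := ih (by omega)
        set BT := Bad.filter (fun u => p u ∈ T) with hBT
        have hBTBad : BT ⊆ Bad := filter_subset _ _
        have hmemBad : ∀ u ∈ Bad, 0 < (nonNbrs G u).card := by
          intro u hu
          rw [hBadDef, mem_filter] at hu
          exact hu.2
        have h1 : BT.card ≤ (Bad ∩ T).card := by
          apply card_le_card_of_injOn p
          · intro u hu
            rw [hBT, mem_coe, mem_filter] at hu
            rw [mem_coe, mem_inter]
            have h2 := hp u (hmemBad u hu.1)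
            refine ⟨?_, hu.2⟩
            rw [hBadDef, mem_filter]
            exact ⟨mem_univ _, h2.2.1⟩
          · intro a ha b hb hab
            have h2 := (hp a (hmemBad a (hBTBad (mem_coe.mp ha)))).2.2
            have h3 := (hp b (hmemBad b (hBTBad (mem_coe.mp hb)))).2.2
            rw [← h2, hab, h3]
        have h2 : Disjoint BT (Bad ∩ T) := by
          rw [disjoint_left]
          intro u huBT huI
          rw [hBT, mem_filter] at huBT
          rw [mem_inter] at huI
          have hpu := hp u (hmemBad u huBT.1)
          have hne : u ≠ p u := (((mem_nonNbrs G).mp hpu.1).1).symm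
          have hadj : G.Adj u (p u) :=
            hT.1 (mem_coe.mpr huI.2) (mem_coe.mpr huBT.2) hne
          exact ((mem_nonNbrs G).mp hpu.1).2 hadj
        have h3 : BT.card + (Bad ∩ T).card ≤ γ := by
          have hsub : BT ∪ (Bad ∩ T) ⊆ Bad := union_subset hBTBad inter_subset_left
          have h4 := card_le_card hsub
          rw [card_union_of_disjoint h2] at h4
          omega
        have hTcard : T.card = j := hT.2
        have hUcard : (T ∪ BT).card ≤ j + γ / 2 := by
          have h4 := card_union_le T BT
          omega
        have hvex : ((univ : Finset V) \ (T ∪ BT)).Nonempty := by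
          rw [← card_pos, card_sdiff_of_subset (subset_univ _), card_univ, hcard]
          omega
        obtain ⟨v, hv⟩ := hvex
        rw [mem_sdiff, mem_union] at hv
        push_neg at hv
        obtain ⟨-, hvT, hvBT⟩ := hv
        have hadjall : ∀ w ∈ T, G.Adj v w := by
          intro w hw
          by_contra hnadj
          have hwv : w ≠ v := by
            rintro rfl
            exact hvT hw
          have hwNB : w ∈ nonNbrs G v := (mem_nonNbrs G).mpr ⟨hwv, hnadj⟩
          have hpos : 0 < (nonNbrs G v).card := card_pos.mpr ⟨w, hwNB⟩
          have hpv := (hp v hpos).1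
          have heq : w = p v := card_le_one.mp (hone v) w hwNB (p v) hpv
          apply hvBT
          rw [hBT, mem_filter]
          refine ⟨?_, by rw [← heq]; exact hw⟩
          rw [hBadDef, mem_filter]
          exact ⟨mem_univ _, hpos⟩
        exact ⟨insert v T, hT.insert hadjall⟩
  have hkle : k ≤ γ + c := by
    by_contra hgt
    push_neg at hgt
    have h1 : γ + c ≤ k - 1 := by omega
    have h2 : (γ + c) * (2 * γ - c) ≤ (k - 1) * (2 * γ - c) :=
      Nat.mul_le_mul_right _ h1
    have h3 : 2 * γ ^ 2 ≤ (γ + c) * (2 * γ - c) := by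
      have he : 2 * γ - c = γ + γ / 2 := by omega
      have key : (γ + c) * (γ + γ / 2) = γ * γ + γ * (γ / 2 + c) + c * (γ / 2) := by
        ring
      have he2 : γ / 2 + c = γ := by omega
      rw [he, key, he2]
      calc 2 * γ ^ 2 = γ * γ + γ * γ := by ring
        _ ≤ γ * γ + γ * γ + c * (γ / 2) := Nat.le_add_right _ _
    exact lt_irrefl _ (lt_of_lt_of_le hcond (le_trans h3 h2))
  exact hclique k hkle
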